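/- For all real a > 1/2 and b > 0, the integral f(a,b) = ∫_0^∞ (x²+1)^(−a) · (φ(x) + √(φ(x)))^(−1/2) dx, where φ(x) = 1 + (4/b²)·(x/(x²+1))², satisfies the identity f(a,b) = 2^(−a) · b · ∫_0^1 [ (1 + √(1−s²))^(a−1) + (1 − √(1−s²))^(a−1) ] · √(1 − b/√(b²+s²)) / ( s·√(1−s²) ) ds. -/

import Mathlib

open Real MeasureTheory

noncomputable def φ (b x : ℝ) : ℝ := 1 + (4 / b ^ 2) * (x / (x ^ 2 + 1)) ^ 2

noncomputable def f (a b : ℝ) : ℝ :=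
  ∫ x in Set.Ioi (0 : ℝ),
    (x ^ 2 + 1) ^ (-a) * (φ b x + Real.sqrt (φ b x)) ^ (-(1 / 2) : ℝ)

open Set

lemma psi_eq {b s : ℝ} (hb : 0 < b) (hs : 0 < s) :
    (1 + s^2/b^2 + Real.sqrt (1 + s^2/b^2)) ^ (-(1/2) : ℝ)
      = (b/s) * Real.sqrt (1 - b / Real.sqrt (b^2+s^2)) := by
  have hrpos : 0 < Real.sqrt (b^2+s^2) := Real.sqrt_pos.2 (by positivity)
  set r := Real.sqrt (b^2+s^2) with hrdef
  have hr2 : r^2 = b^2+s^2 := Real.sq_sqrt (by positivity)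
  have hbr : b ≤ r := by nlinarith [sq_nonneg s]
  have h1 : 1 + s^2/b^2 = (r/b)^2 := by
    field_simp
    linarith [hr2]
  have hsq1 : Real.sqrt (1 + s^2/b^2) = r/b := by
    rw [h1, Real.sqrt_sq (by positivity)]
  have hW : (0:ℝ) < 1 + s^2/b^2 + Real.sqrt (1+s^2/b^2) := by positivity
  rw [Real.rpow_neg hW.le, ← Real.sqrt_eq_rpow, hsq1]
  have hgoal : (1 + s^2/b^2 + r/b)⁻¹ = (b/s)^2 * (1 - b/r) := by
    have hrne : r ≠ 0 := hrpos.ne'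
    have hbne : b ≠ 0 := hb.ne'
    rw [inv_eq_iff_eq_inv, eq_comm, inv_eq_iff_eq_inv, eq_comm]
    field_simp
    linear_combination (-b) * hr2
  calc (Real.sqrt (1+s^2/b^2+r/b))⁻¹
      = Real.sqrt ((1+s^2/b^2+r/b)⁻¹) := (Real.sqrt_inv _).symm
    _ = Real.sqrt ((b/s)^2*(1-b/r)) := by rw [hgoal]
    _ = Real.sqrt ((b/s)^2) * Real.sqrt (1-b/r) := Real.sqrt_mul (by positivity) _
    _ = (b/s) * Real.sqrt (1-b/r) := by rw [Real.sqrt_sq (by positivity)]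

lemma phi_val' {b x s : ℝ} (h : x/(x^2+1) = s/2) : φ b x = 1 + s^2/b^2 := by
  rw [φ, h]; ring

lemma key1' (a : ℝ) {b s : ℝ} (hb : 0 < b) (hs : s ∈ Set.Ioo (0:ℝ) 1) :
    |(1 - Real.sqrt (1-s^2)) / (Real.sqrt (1-s^2) * s^2)| *
      ((((1 - Real.sqrt (1-s^2))/s)^2+1)^(-a) *
        (φ b ((1 - Real.sqrt (1-s^2))/s) + Real.sqrt (φ b ((1 - Real.sqrt (1-s^2))/s))) ^ (-(1/2):ℝ))
    = 2^(-a) * b * ((1+Real.sqrt (1-s^2))^(a-1) * Real.sqrt (1 - b/Real.sqrt (b^2+s^2)) / (s * Real.sqrt (1-s^2))) := by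
  obtain ⟨hs0, hs1⟩ := hs
  set c := Real.sqrt (1-s^2) with hc
  have hc2 : c^2 = 1-s^2 := Real.sq_sqrt (by nlinarith)
  have hc0 : 0 < c := Real.sqrt_pos.2 (by nlinarith)
  have hc1 : c < 1 := by nlinarith
  have hx1 : ((1-c)/s)^2+1 = 2/(1+c) := by
    field_simp
    linear_combination (c-1) * hc2
  have hq1 : ((1-c)/s)/(((1-c)/s)^2+1) = s/2 := by
    rw [hx1]; field_simp; linear_combination (-1) * hc2
  rw [phi_val' hq1, psi_eq hb hs0, hx1]
  have hra : (2/(1+c))^(-a) = 2^(-a) * ((1+c)^(a-1) * (1+c)) := by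
    rw [Real.div_rpow (by norm_num) (by positivity), Real.rpow_neg (by positivity : (0:ℝ) ≤ 1+c),
      ← Real.rpow_add_one (by positivity : (1:ℝ)+c ≠ 0) (a-1)]
    have h : a - 1 + 1 = a := by ring
    rw [h]; field_simp
  rw [hra, abs_of_pos (div_pos (by linarith) (by positivity))]
  set Q := Real.sqrt (1 - b / Real.sqrt (b^2+s^2)) with hQ
  set X := (1+c)^(a-1) with hX
  set T := (2:ℝ)^(-a) with hT
  field_simp
  linear_combination (-(T*X*Q)) * hc2

lemma key2' (a : ℝ) {b s : ℝ} (hb : 0 < b) (hs : s ∈ Set.Ioo (0:ℝ) 1) :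
    |-((1 + Real.sqrt (1-s^2)) / (Real.sqrt (1-s^2) * s^2))| *
      ((((1 + Real.sqrt (1-s^2))/s)^2+1)^(-a) *
        (φ b ((1 + Real.sqrt (1-s^2))/s) + Real.sqrt (φ b ((1 + Real.sqrt (1-s^2))/s))) ^ (-(1/2):ℝ))
    = 2^(-a) * b * ((1-Real.sqrt (1-s^2))^(a-1) * Real.sqrt (1 - b/Real.sqrt (b^2+s^2)) / (s * Real.sqrt (1-s^2))) := by
  obtain ⟨hs0, hs1⟩ := hs
  set c := Real.sqrt (1-s^2) with hc
  have hc2 : c^2 = 1-s^2 := Real.sq_sqrt (by nlinarith)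
  have hc0 : 0 < c := Real.sqrt_pos.2 (by nlinarith)
  have hc1 : c < 1 := by nlinarith
  have h1c : (1:ℝ) - c ≠ 0 := by linarith
  have hx1 : ((1+c)/s)^2+1 = 2/(1-c) := by
    have hs2 : s^2 = (1-c)*(1+c) := by linear_combination hc2
    rw [div_pow, hs2]
    rw [div_add' _ _ _ (by positivity), div_eq_div_iff (by positivity) h1c]
    ring
  have hq1 : ((1+c)/s)/(((1+c)/s)^2+1) = s/2 := by
    rw [hx1]; field_simp; linear_combination (-1) * hc2
  rw [phi_val' hq1, psi_eq hb hs0, hx1]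
  have hra : (2/(1-c))^(-a) = 2^(-a) * ((1-c)^(a-1) * (1-c)) := by
    rw [Real.div_rpow (by norm_num) (by linarith), Real.rpow_neg (by linarith : (0:ℝ) ≤ 1-c),
      ← Real.rpow_add_one (by linarith : (1:ℝ)-c ≠ 0) (a-1)]
    have h : a - 1 + 1 = a := by ring
    rw [h]; field_simp
  rw [hra, abs_neg, abs_of_pos (div_pos (by linarith) (by positivity))]
  set Q := Real.sqrt (1 - b / Real.sqrt (b^2+s^2)) with hQ
  set X := (1-c)^(a-1) with hX
  set T := (2:ℝ)^(-a) with hT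
  field_simp
  linear_combination (-(T*X*Q)) * hc2

lemma sqrt_deriv' {s : ℝ} (hs0 : 0 < s) (hs1 : s < 1) :
    HasDerivAt (fun t : ℝ => Real.sqrt (1 - t^2)) (-s / Real.sqrt (1-s^2)) s := by
  have hcne : Real.sqrt (1-s^2) ≠ 0 := (Real.sqrt_pos.2 (by nlinarith)).ne'
  have h1 : HasDerivAt (fun t : ℝ => 1 - t^2) (-(2*s)) s := by
    simpa using (hasDerivAt_pow 2 s).const_sub 1
  have h2 := (Real.hasDerivAt_sqrt (by nlinarith : (1:ℝ) - s^2 ≠ 0)).comp s h1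
  refine h2.congr_deriv ?_; symm
  field_simp

lemma u_deriv' {s : ℝ} (hs : s ∈ Set.Ioo (0:ℝ) 1) :
    HasDerivAt (fun t : ℝ => (1 - Real.sqrt (1-t^2))/t)
      ((1 - Real.sqrt (1-s^2)) / (Real.sqrt (1-s^2) * s^2)) s := by
  obtain ⟨hs0, hs1⟩ := hs
  have hc2 : (Real.sqrt (1-s^2))^2 = 1-s^2 := Real.sq_sqrt (by nlinarith)
  have hc0 : 0 < Real.sqrt (1-s^2) := Real.sqrt_pos.2 (by nlinarith)
  have hnum : HasDerivAt (fun t : ℝ => 1 - Real.sqrt (1-t^2)) (s / Real.sqrt (1-s^2)) s := by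
    have h := (sqrt_deriv' hs0 hs1).const_sub 1
    refine h.congr_deriv ?_; symm
    field_simp
  have h := hnum.div (hasDerivAt_id s) hs0.ne'
  refine h.congr_deriv ?_; symm
  simp only [id]; field_simp
  linear_combination -hc2

lemma v_deriv' {s : ℝ} (hs : s ∈ Set.Ioo (0:ℝ) 1) :
    HasDerivAt (fun t : ℝ => (1 + Real.sqrt (1-t^2))/t)
      (-((1 + Real.sqrt (1-s^2)) / (Real.sqrt (1-s^2) * s^2))) s := by
  obtain ⟨hs0, hs1⟩ := hs
  have hc2 : (Real.sqrt (1-s^2))^2 = 1-s^2 := Real.sq_sqrt (by nlinarith)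
  have hc0 : 0 < Real.sqrt (1-s^2) := Real.sqrt_pos.2 (by nlinarith)
  have hnum : HasDerivAt (fun t : ℝ => 1 + Real.sqrt (1-t^2)) (-s / Real.sqrt (1-s^2)) s := by
    have h := (sqrt_deriv' hs0 hs1).const_add 1
    convert h using 1
  have h := hnum.div (hasDerivAt_id s) hs0.ne'
  refine h.congr_deriv ?_; symm
  simp only [id]; field_simp
  linear_combination hc2

lemma ux1' {s : ℝ} (hs : s ∈ Set.Ioo (0:ℝ) 1) :
    ((1 - Real.sqrt (1-s^2))/s)^2 + 1 = 2/(1+Real.sqrt (1-s^2)) := by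
  obtain ⟨hs0, hs1⟩ := hs
  have hc2 : (Real.sqrt (1-s^2))^2 = 1-s^2 := Real.sq_sqrt (by nlinarith)
  field_simp
  linear_combination (Real.sqrt (1-s^2)-1) * hc2

lemma u_inj' : Set.InjOn (fun s : ℝ => (1 - Real.sqrt (1-s^2))/s) (Set.Ioo 0 1) := by
  intro s1 h1 s2 h2 heq
  simp only at heq
  have e1 := ux1' h1
  have e2 := ux1' h2
  have hp1 : (0:ℝ) < 1 + Real.sqrt (1-s1^2) := by positivity
  have hp2 : (0:ℝ) < 1 + Real.sqrt (1-s2^2) := by positivity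
  have hdd : 2/(1+Real.sqrt (1-s1^2)) = 2/(1+Real.sqrt (1-s2^2)) := by
    rw [← e1, ← e2, heq]
  have hcc : Real.sqrt (1-s1^2) = Real.sqrt (1-s2^2) := by
    field_simp at hdd
    linarith
  have hq : 1 - s1^2 = 1 - s2^2 := by
    have := congrArg (fun t => t^2) hcc
    simpa [Real.sq_sqrt (by nlinarith [h1.1, h1.2] : (0:ℝ) ≤ 1 - s1^2),
      Real.sq_sqrt (by nlinarith [h2.1, h2.2] : (0:ℝ) ≤ 1 - s2^2)] using this
  nlinarith [h1.1, h2.1]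

lemma v_inj' : Set.InjOn (fun s : ℝ => (1 + Real.sqrt (1-s^2))/s) (Set.Ioo 0 1) := by
  have : StrictAntiOn (fun s : ℝ => (1 + Real.sqrt (1-s^2))/s) (Set.Ioo 0 1) := by
    intro s1 h1 s2 h2 hlt
    simp only
    have hcc : Real.sqrt (1-s2^2) < Real.sqrt (1-s1^2) :=
      Real.sqrt_lt_sqrt (by nlinarith [h2.1, h2.2]) (by nlinarith [h1.1, h2.1])
    rw [div_lt_div_iff₀ h2.1 h1.1]
    nlinarith [Real.sqrt_nonneg (1-s2^2), h1.1, h2.1, hlt,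
      mul_pos (show (0:ℝ) < 1 + Real.sqrt (1-s2^2) by positivity) (show (0:ℝ) < s2 - s1 by linarith)]
  exact this.injOn

lemma u_img' : (fun s : ℝ => (1 - Real.sqrt (1-s^2))/s) '' (Set.Ioo 0 1) = Set.Ioo 0 1 := by
  ext x
  constructor
  · rintro ⟨s, ⟨hs0, hs1⟩, rfl⟩
    have hc2 : (Real.sqrt (1-s^2))^2 = 1-s^2 := Real.sq_sqrt (by nlinarith)
    have hc0 : 0 < Real.sqrt (1-s^2) := Real.sqrt_pos.2 (by nlinarith)
    have hc1 : Real.sqrt (1-s^2) < 1 := by nlinarith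
    refine ⟨div_pos (by linarith) hs0, ?_⟩
    rw [div_lt_one hs0]
    nlinarith [mul_pos (show (0:ℝ) < 1 - Real.sqrt (1-s^2) by linarith) hc0]
  · rintro ⟨hx0, hx1⟩
    refine ⟨2*x/(1+x^2), ⟨by positivity, ?_⟩, ?_⟩
    · rw [div_lt_one (by positivity)]
      nlinarith [sq_nonneg (1-x)]
    · have h1 : 1 - (2*x/(1+x^2))^2 = ((1-x^2)/(1+x^2))^2 := by
        field_simp
        ring
      simp only [h1]
      rw [Real.sqrt_sq (div_nonneg (by nlinarith) (by positivity))]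
      rw [div_eq_iff (ne_of_gt (div_pos (by linarith) (by positivity)))]
      field_simp
      ring

lemma v_img' : (fun s : ℝ => (1 + Real.sqrt (1-s^2))/s) '' (Set.Ioo 0 1) = Set.Ioi 1 := by
  ext x
  constructor
  · rintro ⟨s, ⟨hs0, hs1⟩, rfl⟩
    have hc0 : 0 ≤ Real.sqrt (1-s^2) := Real.sqrt_nonneg _
    simp only [Set.mem_Ioi]
    rw [lt_div_iff₀ hs0]
    linarith
  · intro hx
    simp only [Set.mem_Ioi] at hx
    have hx0 : 0 < x := by linarith
    refine ⟨2*x/(1+x^2), ⟨by positivity, ?_⟩, ?_⟩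
    · rw [div_lt_one (by positivity)]
      nlinarith [pow_pos (show (0:ℝ) < x - 1 by linarith) 2]
    · have h1 : 1 - (2*x/(1+x^2))^2 = ((x^2-1)/(1+x^2))^2 := by
        field_simp
        ring
      simp only [h1]
      rw [Real.sqrt_sq (div_nonneg (by nlinarith) (by positivity))]
      rw [div_eq_iff (ne_of_gt (div_pos (by linarith) (by positivity)))]
      field_simp
      ring

lemma phi_ge_one (b x : ℝ) : (1:ℝ) ≤ φ b x := by
  rw [φ]
  have : (0:ℝ) ≤ (4 / b ^ 2) * (x / (x ^ 2 + 1)) ^ 2 := by positivity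
  linarith

lemma h_cont (a b : ℝ) :
    Continuous (fun x : ℝ => (x^2+1)^(-a) * (φ b x + Real.sqrt (φ b x)) ^ (-(1/2):ℝ)) := by
  have hφc : Continuous (φ b) := by
    unfold φ
    exact continuous_const.add (continuous_const.mul
      ((continuous_id.div (by continuity) (fun x => by positivity)).pow 2))
  apply Continuous.mul
  · exact (by continuity : Continuous fun x : ℝ => x^2+1).rpow_const
      (fun x => Or.inl (by positivity))
  · exact (hφc.add hφc.sqrt).rpow_const
      (fun x => Or.inl (by simp only [Pi.add_apply]; nlinarith [phi_ge_one b x, Real.sqrt_nonneg (φ b x)]))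

lemma h_int {a : ℝ} (b : ℝ) (ha : 1/2 < a) :
    Integrable (fun x : ℝ => (x^2+1)^(-a) * (φ b x + Real.sqrt (φ b x)) ^ (-(1/2):ℝ)) := by
  have hfr : ((Module.finrank ℝ ℝ : ℝ)) < 2*a := by
    simp [Module.finrank_self]
    linarith
  have hmaj : Integrable (fun x : ℝ => ((1:ℝ) + ‖x‖^2) ^ (-(2*a)/2)) :=
    integrable_rpow_neg_one_add_norm_sq hfr
  refine hmaj.mono' (h_cont a b).aestronglyMeasurable (Filter.Eventually.of_forall fun x => ?_)
  have hb1 : (1:ℝ) ≤ φ b x + Real.sqrt (φ b x) := by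
    nlinarith [phi_ge_one b x, Real.sqrt_nonneg (φ b x)]
  have h1 : ((1:ℝ) + ‖x‖^2) ^ (-(2*a)/2) = (x^2+1)^(-a) := by
    have he : -(2*a)/2 = -a := by ring
    rw [he, Real.norm_eq_abs, sq_abs, add_comm]
  rw [h1, Real.norm_eq_abs, abs_of_nonneg (mul_nonneg (Real.rpow_nonneg (by positivity) _)
    (Real.rpow_nonneg (by linarith) _))]
  have hle : (φ b x + Real.sqrt (φ b x)) ^ (-(1/2):ℝ) ≤ 1 :=
    Real.rpow_le_one_of_one_le_of_nonpos hb1 (by norm_num)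
  calc (x^2+1)^(-a) * (φ b x + Real.sqrt (φ b x)) ^ (-(1/2):ℝ)
      ≤ (x^2+1)^(-a) * 1 :=
        mul_le_mul_of_nonneg_left hle (Real.rpow_nonneg (by positivity) _)
    _ = (x^2+1)^(-a) := mul_one _

theorem stmt_0 (a b : ℝ) (ha : 1 / 2 < a) (hb : 0 < b) :
    f a b = (2 : ℝ) ^ (-a) * b *
      ∫ s in Set.Ioo (0 : ℝ) 1,
        ((1 + Real.sqrt (1 - s ^ 2)) ^ (a - 1) + (1 - Real.sqrt (1 - s ^ 2)) ^ (a - 1)) *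
          Real.sqrt (1 - b / Real.sqrt (b ^ 2 + s ^ 2)) / (s * Real.sqrt (1 - s ^ 2)) := by
  set h : ℝ → ℝ := fun x => (x^2+1)^(-a) * (φ b x + Real.sqrt (φ b x)) ^ (-(1/2):ℝ) with hh
  have hint : Integrable h := h_int b ha
  have hi1 : IntegrableOn h (Set.Ioo (0:ℝ) 1) := hint.integrableOn
  have hi2 : IntegrableOn h (Set.Ici (1:ℝ)) := hint.integrableOn
  have hi2' : IntegrableOn h (Set.Ioi (1:ℝ)) := hint.integrableOn
  -- split
  have hsplit : ∫ x in Set.Ioi (0:ℝ), h x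
      = (∫ x in Set.Ioo (0:ℝ) 1, h x) + ∫ x in Set.Ioi (1:ℝ), h x := by
    have hdisj : Disjoint (Set.Ioo (0:ℝ) 1) (Set.Ici (1:ℝ)) := by
      rw [Set.disjoint_left]
      rintro x ⟨_, hx1⟩ hx2
      exact absurd hx2 (not_le.2 hx1)
    rw [← Set.Ioo_union_Ici_eq_Ioi (zero_lt_one),
      setIntegral_union hdisj measurableSet_Ici hi1 hi2,
      show (∫ x in Set.Ici (1:ℝ), h x) = ∫ x in Set.Ioi (1:ℝ), h x from
        (setIntegral_congr_set Ioi_ae_eq_Ici).symm]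
  -- change of variables, branch 1
  have hu_derivW : ∀ s ∈ Set.Ioo (0:ℝ) 1,
      HasDerivWithinAt (fun t : ℝ => (1 - Real.sqrt (1-t^2))/t)
        ((fun s : ℝ => (1 - Real.sqrt (1-s^2)) / (Real.sqrt (1-s^2) * s^2)) s)
        (Set.Ioo 0 1) s :=
    fun s hs => (u_deriv' hs).hasDerivWithinAt
  have hv_derivW : ∀ s ∈ Set.Ioo (0:ℝ) 1,
      HasDerivWithinAt (fun t : ℝ => (1 + Real.sqrt (1-t^2))/t)
        ((fun s : ℝ => -((1 + Real.sqrt (1-s^2)) / (Real.sqrt (1-s^2) * s^2))) s)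
        (Set.Ioo 0 1) s :=
    fun s hs => (v_deriv' hs).hasDerivWithinAt
  have e1 : ∫ x in Set.Ioo (0:ℝ) 1, h x
      = ∫ s in Set.Ioo (0:ℝ) 1,
          |(1 - Real.sqrt (1-s^2)) / (Real.sqrt (1-s^2) * s^2)| • h ((1 - Real.sqrt (1-s^2))/s) := by
    conv_lhs => rw [← u_img']
    exact integral_image_eq_integral_abs_deriv_smul measurableSet_Ioo hu_derivW u_inj' h
  have e2 : ∫ x in Set.Ioi (1:ℝ), h x
      = ∫ s in Set.Ioo (0:ℝ) 1,
          |-((1 + Real.sqrt (1-s^2)) / (Real.sqrt (1-s^2) * s^2))| • h ((1 + Real.sqrt (1-s^2))/s) := by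
    conv_lhs => rw [← v_img']
    exact integral_image_eq_integral_abs_deriv_smul measurableSet_Ioo hv_derivW v_inj' h
  -- integrability of transformed integrands
  have hT1 : IntegrableOn (fun s : ℝ =>
      |(1 - Real.sqrt (1-s^2)) / (Real.sqrt (1-s^2) * s^2)| • h ((1 - Real.sqrt (1-s^2))/s))
      (Set.Ioo (0:ℝ) 1) := by
    refine (integrableOn_image_iff_integrableOn_abs_deriv_smul measurableSet_Ioo
      hu_derivW u_inj' h).1 ?_
    rw [u_img']
    exact hi1
  have hT2 : IntegrableOn (fun s : ℝ =>
      |-((1 + Real.sqrt (1-s^2)) / (Real.sqrt (1-s^2) * s^2))| • h ((1 + Real.sqrt (1-s^2))/s))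
      (Set.Ioo (0:ℝ) 1) := by
    refine (integrableOn_image_iff_integrableOn_abs_deriv_smul measurableSet_Ioo
      hv_derivW v_inj' h).1 ?_
    rw [v_img']
    exact hi2'
  -- combine
  have hcomb : (∫ s in Set.Ioo (0:ℝ) 1,
        |(1 - Real.sqrt (1-s^2)) / (Real.sqrt (1-s^2) * s^2)| • h ((1 - Real.sqrt (1-s^2))/s))
      + (∫ s in Set.Ioo (0:ℝ) 1,
        |-((1 + Real.sqrt (1-s^2)) / (Real.sqrt (1-s^2) * s^2))| • h ((1 + Real.sqrt (1-s^2))/s))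
      = ∫ s in Set.Ioo (0:ℝ) 1, (2:ℝ)^(-a) * b *
          (((1 + Real.sqrt (1 - s ^ 2)) ^ (a - 1) + (1 - Real.sqrt (1 - s ^ 2)) ^ (a - 1)) *
            Real.sqrt (1 - b / Real.sqrt (b ^ 2 + s ^ 2)) / (s * Real.sqrt (1 - s ^ 2))) := by
    rw [← integral_add hT1 hT2]
    refine setIntegral_congr_fun measurableSet_Ioo (fun s hs => ?_)
    have k1 := key1' a hb hs
    have k2 := key2' a hb hs
    simp only [smul_eq_mul, hh]
    rw [k1, k2]
    ring
  rw [f]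
  simp only [hh] at hsplit e1 e2 hcomb ⊢
  rw [hsplit, e1, e2, hcomb, ← integral_const_mul]
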